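/- Let λ, μ be nonzero real numbers with λ ≠ μ, and let A : ℂ² → ℂ² be the ℂ-linear map A(x,y) = (λ·x, μ·y). Suppose P ⊆ ℂ² is an ℝ-linear subspace of real dimension 2 which is not a ℂ-linear subspace, and suppose A(P) ⊆ P. Then there exist unit complex numbers ζ₁, ζ₂ (equivalently, angles α₁, α₂) such that P = (ℝ·ζ₁) × (ℝ·ζ₂) = {(x,y) ∈ ℂ² : x ∈ e^{iα₁}·ℝ and y ∈ e^{iα₂}·ℝ}. In particular, P is a totally real plane which is a product of a real line in each coordinate axis. -/

import Mathlib

/-- If the ℂ-linear map `A(x,y) = (λx, μy)` with `λ, μ` nonzero distinct reals stabilizes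
a real 2-dimensional ℝ-subspace `P ⊆ ℂ²` which is not a complex line, then `P` is a
totally real plane of the form `(ℝ·ζ₁) × (ℝ·ζ₂)` for some unit complex numbers `ζ₁, ζ₂`
(equivalently `P = {x ∈ e^{iα₁}ℝ, y ∈ e^{iα₂}ℝ}`). -/
theorem stmt17 (l m : ℝ) (hl : l ≠ 0) (hm : m ≠ 0) (hlm : l ≠ m)
    (P : Submodule ℝ (ℂ × ℂ)) (hdim : Module.finrank ℝ P = 2)
    (hnotc : ¬ ∀ v ∈ P, Complex.I • v ∈ P)
    (hinv : ∀ v ∈ P, ((l : ℂ) * v.1, (m : ℂ) * v.2) ∈ P) :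
    ∃ ζ₁ ζ₂ : ℂ, ‖ζ₁‖ = 1 ∧ ‖ζ₂‖ = 1 ∧
      (P : Set (ℂ × ℂ)) =
        {p : ℂ × ℂ | ∃ s t : ℝ, p = ((s : ℂ) * ζ₁, (t : ℂ) * ζ₂)} := by
  have hlm' : l - m ≠ 0 := sub_ne_zero.mpr hlm
  -- key splitting: if v ∈ P then (0, v.2) ∈ P and (v.1, 0) ∈ P
  have key2 : ∀ v ∈ P, ((0 : ℂ), v.2) ∈ P := by
    intro v hv
    have h1 := hinv v hv
    have h2 : l • v - ((l : ℂ) * v.1, (m : ℂ) * v.2) ∈ P := P.sub_mem (P.smul_mem l hv) h1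
    have h3 : (l - m)⁻¹ • (l • v - ((l : ℂ) * v.1, (m : ℂ) * v.2)) ∈ P := P.smul_mem _ h2
    convert h3 using 1
    have : v = (v.1, v.2) := rfl
    rw [this]
    simp only [Prod.smul_mk, Prod.mk_sub_mk, Complex.real_smul]
    refine Prod.ext ?_ ?_ <;> simp only
    · push_cast; ring
    · have hlmC : (l : ℂ) - m ≠ 0 := sub_ne_zero.mpr (by exact_mod_cast hlm)
      push_cast
      field_simp
  have key1 : ∀ v ∈ P, (v.1, (0 : ℂ)) ∈ P := by
    intro v hv
    have h := P.sub_mem hv (key2 v hv)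
    have he : (v.1, (0 : ℂ)) = v - ((0 : ℂ), v.2) := by
      refine Prod.ext ?_ ?_ <;> simp
    rw [he]; exact h
  -- the coordinate subspaces
  set Q₁ : Submodule ℝ ℂ := P.comap (LinearMap.inl ℝ ℂ ℂ) with hQ₁
  set Q₂ : Submodule ℝ ℂ := P.comap (LinearMap.inr ℝ ℂ ℂ) with hQ₂
  have mem1 : ∀ x : ℂ, x ∈ Q₁ ↔ ((x, (0:ℂ)) ∈ P) := fun x => Iff.rfl
  have mem2 : ∀ x : ℂ, x ∈ Q₂ ↔ (((0:ℂ), x) ∈ P) := fun x => Iff.rfl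
  have memP : ∀ v : ℂ × ℂ, v ∈ P ↔ v.1 ∈ Q₁ ∧ v.2 ∈ Q₂ := by
    intro v
    constructor
    · intro hv; exact ⟨key1 v hv, key2 v hv⟩
    · rintro ⟨h1, h2⟩
      have := P.add_mem ((mem1 v.1).mp h1) ((mem2 v.2).mp h2)
      simpa using this
  -- dimension count via the map Q₁ × Q₂ → ℂ × ℂ
  have hsum : Module.finrank ℝ Q₁ + Module.finrank ℝ Q₂ = 2 := by
    let φ : (Q₁ × Q₂) →ₗ[ℝ] ℂ × ℂ :=
      LinearMap.coprod ((LinearMap.inl ℝ ℂ ℂ).comp Q₁.subtype)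
        ((LinearMap.inr ℝ ℂ ℂ).comp Q₂.subtype)
    have hφ : ∀ ab : Q₁ × Q₂, φ ab = ((ab.1 : ℂ), (ab.2 : ℂ)) := by
      rintro ⟨a, b⟩
      simp [φ, Prod.ext_iff]
    have hinj : Function.Injective φ := by
      intro a b hab
      rw [hφ, hφ, Prod.ext_iff] at hab
      exact Prod.ext (Subtype.ext hab.1) (Subtype.ext hab.2)
    have hrange : LinearMap.range φ = P := by
      apply le_antisymm
      · rintro x ⟨ab, rfl⟩
        rw [hφ]
        rw [memP]
        exact ⟨ab.1.2, ab.2.2⟩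
      · intro v hv
        exact ⟨(⟨v.1, key1 v hv⟩, ⟨v.2, key2 v hv⟩), by rw [hφ]⟩
    have e1 : Module.finrank ℝ (Q₁ × Q₂) = Module.finrank ℝ P := by
      rw [← hrange]
      exact (LinearEquiv.ofInjective φ hinj).finrank_eq
    rw [← Module.finrank_prod, e1, hdim]
  have hle1 : Module.finrank ℝ Q₁ ≤ 2 := by
    simpa [Complex.finrank_real_complex] using Q₁.finrank_le
  have hle2 : Module.finrank ℝ Q₂ ≤ 2 := by
    simpa [Complex.finrank_real_complex] using Q₂.finrank_le
  -- rule out the degenerate cases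
  have hne2 : Module.finrank ℝ Q₁ ≠ 2 := by
    intro h2
    have hQtop : Q₁ = ⊤ := Submodule.eq_top_of_finrank_eq (by rw [h2, Complex.finrank_real_complex])
    have hQbot : Q₂ = ⊥ := by
      have : Module.finrank ℝ Q₂ = 0 := by omega
      exact Submodule.finrank_eq_zero.mp this
    apply hnotc
    intro v hv
    have hv2 : v.2 = 0 := by
      have := (memP v).mp hv
      simpa [hQbot] using this.2
    rw [memP]
    constructor
    · rw [hQtop]; trivial
    · have : (Complex.I • v).2 = 0 := by simp [hv2]
      rw [this]; exact Q₂.zero_mem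
  have hne2' : Module.finrank ℝ Q₂ ≠ 2 := by
    intro h2
    have hQtop : Q₂ = ⊤ := Submodule.eq_top_of_finrank_eq (by rw [h2, Complex.finrank_real_complex])
    have hQbot : Q₁ = ⊥ := by
      have : Module.finrank ℝ Q₁ = 0 := by omega
      exact Submodule.finrank_eq_zero.mp this
    apply hnotc
    intro v hv
    have hv1 : v.1 = 0 := by
      have := (memP v).mp hv
      simpa [hQbot] using this.1
    rw [memP]
    refine ⟨?_, by rw [hQtop]; trivial⟩
    have : (Complex.I • v).1 = 0 := by simp [hv1]
    rw [this]; exact Q₁.zero_mem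
  have h11 : Module.finrank ℝ Q₁ = 1 ∧ Module.finrank ℝ Q₂ = 1 := by omega
  -- extract generators
  have gen : ∀ (Q : Submodule ℝ ℂ), Module.finrank ℝ Q = 1 →
      ∃ ζ : ℂ, ‖ζ‖ = 1 ∧ ∀ x : ℂ, x ∈ Q ↔ ∃ s : ℝ, x = (s : ℂ) * ζ := by
    intro Q hQ
    have hprin : Q.IsPrincipal := Q.finrank_le_one_iff_isPrincipal.mp (by omega)
    obtain ⟨w, hw⟩ := hprin.principal
    have hwne : w ≠ 0 := by
      rintro rfl
      rw [Submodule.span_zero_singleton] at hw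
      rw [hw] at hQ
      simp at hQ
    refine ⟨w / ‖w‖, ?_, ?_⟩
    · rw [norm_div, Complex.norm_real, norm_norm,
        div_self (norm_ne_zero_iff.mpr hwne)]
    · intro x
      rw [hw, Submodule.mem_span_singleton]
      constructor
      · rintro ⟨s, rfl⟩
        refine ⟨s * ‖w‖, ?_⟩
        have habs : (‖w‖ : ℂ) ≠ 0 := by simpa using hwne
        rw [Complex.real_smul]
        push_cast
        field_simp
      · rintro ⟨s, rfl⟩
        refine ⟨s / ‖w‖, ?_⟩
        have habs : (‖w‖ : ℂ) ≠ 0 := by simpa using hwne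
        rw [Complex.real_smul]
        push_cast
        field_simp
  obtain ⟨ζ₁, hζ₁, hgen1⟩ := gen Q₁ h11.1
  obtain ⟨ζ₂, hζ₂, hgen2⟩ := gen Q₂ h11.2
  refine ⟨ζ₁, ζ₂, hζ₁, hζ₂, ?_⟩
  ext v
  simp only [SetLike.mem_coe, Set.mem_setOf_eq]
  rw [memP, hgen1, hgen2]
  constructor
  · rintro ⟨⟨s, hs⟩, ⟨t, ht⟩⟩
    exact ⟨s, t, Prod.ext hs ht⟩
  · rintro ⟨s, t, rfl⟩
    exact ⟨⟨s, rfl⟩, ⟨t, rfl⟩⟩
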